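/- Let D be a measurable space, let f be a trade-off function, let P be a probability measure on D, let ℓ : D × D → ℝ be jointly measurable, let γ ∈ ℝ, and let ρ be a Markov kernel from D to D such that for all z, z' ∈ D and every measurable φ : D → [0,1], ∫ φ d(ρ(z)) ≤ 1 − f(∫ φ d(ρ(z'))). Define succ := ∫_D ρ(z)({ẑ : ℓ(z,ẑ) ≤ γ}) dP(z) and base := ∫_D ∫_D ρ(z')({ẑ : ℓ(z,ẑ) ≤ γ}) dP(z') dP(z). Then succ ≤ 1 − f(base). -/

import Mathlib

open MeasureTheory ProbabilityTheory

/-- A trade-off function: convex, continuous, non-increasing on `[0,1]`,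
taking values in `[0,1]` with `f α ≤ 1 - α`. -/
def IsTradeoff (f : ℝ → ℝ) : Prop :=
  ConvexOn ℝ (Set.Icc (0:ℝ) 1) f ∧ ContinuousOn f (Set.Icc (0:ℝ) 1) ∧
  AntitoneOn f (Set.Icc (0:ℝ) 1) ∧
  ∀ x ∈ Set.Icc (0:ℝ) 1, f x ∈ Set.Icc (0:ℝ) 1 ∧ f x ≤ 1 - x

/-- The pair `(P, Q)` satisfies the `f`-DP inequality: every randomized test `φ` has
`∫ φ dQ ≤ 1 - f (∫ φ dP)`. -/
def FDPIneq {Θ : Type*} [MeasurableSpace Θ] (f : ℝ → ℝ) (P Q : Measure Θ) : Prop :=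
  ∀ φ : Θ → ℝ, Measurable φ → (∀ θ, φ θ ∈ Set.Icc (0:ℝ) 1) →
    ∫ θ, φ θ ∂Q ≤ 1 - f (∫ θ, φ θ ∂P)

/-- The clamp of a real to `[0,1]`. -/
noncomputable def clamp01 (x : ℝ) : ℝ := min (max x 0) 1

lemma clamp01_mem (x : ℝ) : clamp01 x ∈ Set.Icc (0:ℝ) 1 :=
  ⟨le_min (le_max_right x 0) zero_le_one, min_le_right _ _⟩

lemma clamp01_continuous : Continuous clamp01 :=
  (continuous_id.max continuous_const).min continuous_const

lemma clamp01_of_mem {x : ℝ} (hx : x ∈ Set.Icc (0:ℝ) 1) : clamp01 x = x := by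
  unfold clamp01
  rw [max_eq_left hx.1, min_eq_left hx.2]

lemma integrable_of_mem_Icc {α : Type*} [MeasurableSpace α] {μ : Measure α}
    [IsProbabilityMeasure μ] {g : α → ℝ} (hg : AEStronglyMeasurable g μ)
    (hmem : ∀ x, g x ∈ Set.Icc (0:ℝ) 1) : Integrable g μ := by
  refine (integrable_const (1:ℝ)).mono' hg (Filter.Eventually.of_forall fun x => ?_)
  rw [Real.norm_eq_abs, abs_le]
  exact ⟨by linarith [(hmem x).1], (hmem x).2⟩

/-- Jensen's inequality specialized to `[0,1]`-valued functions. -/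
lemma jensen_icc {α : Type*} [MeasurableSpace α] {μ : Measure α} [IsProbabilityMeasure μ]
    {f : ℝ → ℝ} (hconv : ConvexOn ℝ (Set.Icc (0:ℝ) 1) f)
    (hcont : ContinuousOn f (Set.Icc (0:ℝ) 1))
    (hfb : ∀ x ∈ Set.Icc (0:ℝ) 1, f x ∈ Set.Icc (0:ℝ) 1)
    {g : α → ℝ} (hg : AEStronglyMeasurable g μ) (hmem : ∀ x, g x ∈ Set.Icc (0:ℝ) 1) :
    f (∫ x, g x ∂μ) ≤ ∫ x, f (g x) ∂μ := by
  have hF : Continuous (fun x => f (clamp01 x)) :=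
    hcont.comp_continuous clamp01_continuous clamp01_mem
  have heq : (fun x => f (g x)) = (fun x => f (clamp01 x)) ∘ g := by
    funext x; simp [clamp01_of_mem (hmem x)]
  have hfg : AEStronglyMeasurable (fun x => f (g x)) μ := by
    rw [heq]; exact hF.comp_aestronglyMeasurable hg
  have hfgmem : ∀ x, f (g x) ∈ Set.Icc (0:ℝ) 1 := fun x => hfb _ (hmem x)
  exact hconv.map_integral_le hcont isClosed_Icc (Filter.Eventually.of_forall hmem)
    (integrable_of_mem_Icc hg hmem) (integrable_of_mem_Icc hfg hfgmem)

/-- Proposition E.2, first part: `f`-DP bound for unbiased reconstruction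
robustness (on-average baseline). -/
theorem stmt_17 {D : Type*} [MeasurableSpace D]
    (f : ℝ → ℝ) (hf : IsTradeoff f)
    (P : Measure D) [IsProbabilityMeasure P]
    (ℓ : D → D → ℝ) (hℓ : Measurable (Function.uncurry ℓ)) (γ : ℝ)
    (ρ : Kernel D D) [IsMarkovKernel ρ]
    (hDP : ∀ z z' : D, FDPIneq f (ρ z') (ρ z))
    (succ base : ℝ)
    (hsucc : succ = ∫ z, ((ρ z) {zhat : D | ℓ z zhat ≤ γ}).toReal ∂P)
    (hbase : base = ∫ z, ∫ z', ((ρ z') {zhat : D | ℓ z zhat ≤ γ}).toReal ∂P ∂P) :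
    succ ≤ 1 - f base := by
  obtain ⟨hconv, hcont, hanti, hfb⟩ := hf
  set E : D → Set D := fun z => {zhat : D | ℓ z zhat ≤ γ} with hE
  have hEmeas : ∀ z, MeasurableSet (E z) := fun z => by
    have : Measurable fun zhat => ℓ z zhat := hℓ.comp (measurable_prodMk_left (x := z))
    exact measurableSet_le this measurable_const
  -- the two-variable function
  set g : D → D → ℝ := fun z z' => ((ρ z') (E z)).toReal with hg
  have hgmem : ∀ z z', g z z' ∈ Set.Icc (0:ℝ) 1 := fun z z' =>
    ⟨ENNReal.toReal_nonneg, by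
      have := prob_le_one (μ := ρ z') (s := E z)
      simpa using ENNReal.toReal_mono (by simp) this⟩
  -- measurability of g as a function of the pair
  have hGmeas : Measurable fun p : D × D => g p.1 p.2 := by
    have hsmeas : MeasurableSet {q : (D × D) × D | ℓ q.1.1 q.2 ≤ γ} := by
      have : Measurable fun q : (D × D) × D => ℓ q.1.1 q.2 :=
        hℓ.comp (measurable_fst.fst.prodMk measurable_snd)
      exact measurableSet_le this measurable_const
    have h := Kernel.measurable_kernel_prodMk_left
      (κ := ρ.comap (Prod.snd : D × D → D) measurable_snd) hsmeas
    have h2 : Measurable fun p : D × D => (ρ p.2) (E p.1) := by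
      simpa [Kernel.comap_apply, Set.preimage_setOf_eq] using h
    exact h2.ennreal_toReal
  have hgmeas : ∀ z, Measurable fun z' => g z z' := fun z =>
    hGmeas.comp (measurable_prodMk_left (x := z))
  -- baseline as a function of z
  set b : D → ℝ := fun z => ∫ z', g z z' ∂P with hb
  have hbmeas : StronglyMeasurable b :=
    (hGmeas.stronglyMeasurable).integral_prod_right'
  have hbmem : ∀ z, b z ∈ Set.Icc (0:ℝ) 1 := by
    intro z
    constructor
    · exact integral_nonneg fun z' => (hgmem z z').1
    · calc b z ≤ ∫ _, (1:ℝ) ∂P := by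
            refine integral_mono (integrable_of_mem_Icc
              (hgmeas z).aestronglyMeasurable (hgmem z)) (integrable_const 1)
              fun z' => (hgmem z z').2
        _ = 1 := by simp
  -- pointwise inequality : succ integrand ≤ 1 - f (b z)
  have key : ∀ z, g z z ≤ 1 - f (b z) := by
    intro z
    -- test function : indicator of E z
    set φ : D → ℝ := (E z).indicator 1 with hφ
    have hφmeas : Measurable φ := (measurable_one).indicator (hEmeas z)
    have hφmem : ∀ θ, φ θ ∈ Set.Icc (0:ℝ) 1 := by
      intro θ
      by_cases h : θ ∈ E z <;> simp [hφ, Set.indicator_apply, h]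
    have hφint : ∀ z' : D, ∫ θ, φ θ ∂(ρ z') = g z z' := by
      intro z'
      simpa [hφ, Measure.real] using integral_indicator_one (μ := ρ z') (hEmeas z)
    -- f (g z z') ≤ 1 - g z z for every z'
    have hpt : ∀ z', f (g z z') ≤ 1 - g z z := by
      intro z'
      have := hDP z z' φ hφmeas hφmem
      rw [hφint z, hφint z'] at this
      linarith
    -- Jensen on the inner integral
    have hJ : f (b z) ≤ ∫ z', f (g z z') ∂P :=
      jensen_icc hconv hcont (fun x hx => (hfb x hx).1)
        (hgmeas z).aestronglyMeasurable (hgmem z)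
    have hfgmem : ∀ z', f (g z z') ∈ Set.Icc (0:ℝ) 1 := fun z' =>
      (hfb _ (hgmem z z')).1
    have hfgmeas : AEStronglyMeasurable (fun z' => f (g z z')) P := by
      have hF : Continuous (fun x => f (clamp01 x)) :=
        hcont.comp_continuous clamp01_continuous clamp01_mem
      have heq : (fun z' => f (g z z')) = (fun x => f (clamp01 x)) ∘ (fun z' => g z z') := by
        funext z'; simp [clamp01_of_mem (hgmem z z')]
      rw [heq]
      exact hF.comp_aestronglyMeasurable (hgmeas z).aestronglyMeasurable
    have hJ2 : ∫ z', f (g z z') ∂P ≤ 1 - g z z := by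
      calc ∫ z', f (g z z') ∂P ≤ ∫ _, (1 - g z z) ∂P :=
            integral_mono (integrable_of_mem_Icc hfgmeas hfgmem)
              (integrable_const _) hpt
        _ = 1 - g z z := by simp
    linarith [hJ.trans hJ2]
  -- now integrate over z
  have hsmeas : Measurable fun z => g z z :=
    hGmeas.comp (measurable_id.prodMk measurable_id)
  have hsmem : ∀ z, g z z ∈ Set.Icc (0:ℝ) 1 := fun z => hgmem z z
  -- measurability of f ∘ b
  have hF : Continuous (fun x => f (clamp01 x)) :=
    hcont.comp_continuous clamp01_continuous clamp01_mem
  have hfbmeas : AEStronglyMeasurable (fun z => f (b z)) P := by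
    have heq : (fun z => f (b z)) = (fun x => f (clamp01 x)) ∘ b := by
      funext z; simp [clamp01_of_mem (hbmem z)]
    rw [heq]
    exact hF.comp_aestronglyMeasurable hbmeas.aestronglyMeasurable
  have hfbmem : ∀ z, f (b z) ∈ Set.Icc (0:ℝ) 1 := fun z => (hfb _ (hbmem z)).1
  have step1 : succ ≤ ∫ z, (1 - f (b z)) ∂P := by
    rw [hsucc]
    exact integral_mono (integrable_of_mem_Icc hsmeas.aestronglyMeasurable hsmem)
      ((integrable_const (1:ℝ)).sub (integrable_of_mem_Icc hfbmeas hfbmem)) key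
  have step2 : ∫ z, (1 - f (b z)) ∂P = 1 - ∫ z, f (b z) ∂P := by
    rw [integral_sub (integrable_const 1) (integrable_of_mem_Icc hfbmeas hfbmem)]
    simp
  have step3 : f base ≤ ∫ z, f (b z) ∂P := by
    rw [hbase]
    exact jensen_icc hconv hcont (fun x hx => (hfb x hx).1)
      hbmeas.aestronglyMeasurable hbmem
  linarith [step1, step2 ▸ step1]
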